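/- Let erf(x) = (2/√π)∫_0^x e^{−y²} dy and let (h_l) be the Hermite polynomials orthonormal with respect to the standard Gaussian density e^{−t²/2}/√(2π) on ℝ. Then the coefficients a_l = ∫ erf(t) h_l(t) e^{−t²/2} dt/√(2π) of the Hermite expansion erf = Σ_l a_l h_l are: a_l = 0 for even l, and a_l = 2(−1)^{(l−1)/2} √((l−1)!) / (√(πl) · 3^{l/2} · ((l−1)/2)!) for odd l. Consequently a_l² ~ (2/(πl))^{3/2} (2/3)^l as odd l → ∞. -/

import Mathlib

open MeasureTheory Polynomial Asymptotics Filter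

noncomputable section

/-- The normalized Hermite polynomials `h_l = He_l/√l!`, orthonormal with respect to the
standard Gaussian density `e^{−t²/2}/√(2π)`; they satisfy the generating-function identity
`e^{tx − t²/2} = ∑_l h_l(x) t^l/√l!`. -/
def hermiteNorm (l : ℕ) (t : ℝ) : ℝ :=
  Polynomial.aeval t (Polynomial.hermite l) / Real.sqrt (Nat.factorial l)

/-- The error function `erf(x) = (2/√π) ∫₀ˣ e^{−y²} dy`. -/
def errf (x : ℝ) : ℝ := (2 / Real.sqrt Real.pi) * ∫ y in (0 : ℝ)..x, Real.exp (-(y ^ 2))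

section Aux

open Real Stirling Topology ProbabilityTheory
open scoped ENNReal NNReal

/-! ### Integrability lemmas -/

lemma integrable_pow_gauss (n : ℕ) {b : ℝ} (hb : 0 < b) :
    Integrable fun x : ℝ => x ^ n * rexp (-b * x ^ 2) := by
  have := integrable_rpow_mul_exp_neg_mul_sq hb (s := n)
    (by have : (0:ℝ) ≤ n := Nat.cast_nonneg n; linarith)
  simpa [Real.rpow_natCast] using this

lemma integrable_poly_gauss (p : Polynomial ℤ) {b : ℝ} (hb : 0 < b) :
    Integrable fun x : ℝ => (aeval x p : ℝ) * rexp (-b * x ^ 2) := by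
  have : (fun x : ℝ => (aeval x p : ℝ) * rexp (-b * x ^ 2)) =
      fun x => ∑ i ∈ Finset.range (p.natDegree + 1),
        (p.coeff i : ℝ) * (x ^ i * rexp (-b * x ^ 2)) := by
    funext x
    rw [aeval_def, eval₂_eq_sum_range, Finset.sum_mul]
    congr 1; funext i
    simp [algebraMap_int_eq, mul_comm, mul_assoc, mul_left_comm]
  rw [this]
  exact integrable_finset_sum _ fun i _ => ((integrable_pow_gauss i hb).const_mul _)

/-! ### errf lemmas -/

lemma integrable_gauss1 : Integrable fun y : ℝ => rexp (-(y ^ 2)) := by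
  simpa using integrable_exp_neg_mul_sq (b := 1) one_pos

lemma errf_hasDerivAt (x : ℝ) : HasDerivAt errf (2 / Real.sqrt Real.pi * rexp (-(x ^ 2))) x := by
  have h : HasDerivAt (fun u => ∫ y in (0:ℝ)..u, rexp (-(y ^ 2))) (rexp (-(x ^ 2))) x := by
    refine intervalIntegral.integral_hasDerivAt_right
      (integrable_gauss1.intervalIntegrable) ?_ ?_
    · exact (Continuous.stronglyMeasurable (by continuity)).stronglyMeasurableAtFilter
    · exact Continuous.continuousAt (by continuity)
  exact h.const_mul (2 / Real.sqrt Real.pi)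

lemma errf_continuous : Continuous errf :=
  (Differentiable.continuous fun x => (errf_hasDerivAt x).differentiableAt)

lemma errf_bound (x : ℝ) : ‖errf x‖ ≤ 2 := by
  have hpos : ∀ y : ℝ, 0 ≤ rexp (-(y ^ 2)) := fun y => (Real.exp_pos _).le
  have key : ∀ u v : ℝ, |∫ y in u..v, rexp (-(y ^ 2))| ≤ ∫ y : ℝ, rexp (-(y ^ 2)) := by
    intro u v
    rw [intervalIntegral.intervalIntegral_eq_integral_uIoc]
    rcases le_or_gt u v with h | h
    · rw [if_pos h, one_smul, abs_of_nonneg (integral_nonneg (fun y => hpos y))]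
      exact setIntegral_le_integral integrable_gauss1 (Filter.Eventually.of_forall hpos)
    · rw [if_neg (not_le.mpr h)]
      simp only [neg_one_smul, abs_neg]
      rw [abs_of_nonneg (integral_nonneg (fun y => hpos y))]
      exact setIntegral_le_integral integrable_gauss1 (Filter.Eventually.of_forall hpos)
  have h2 : ∫ y : ℝ, rexp (-(y ^ 2)) = Real.sqrt π := by
    simpa using integral_gaussian 1
  have hπ : 0 < Real.sqrt π := Real.sqrt_pos.mpr Real.pi_pos
  rw [Real.norm_eq_abs, errf, abs_mul, abs_of_nonneg (by positivity : (0:ℝ) ≤ 2 / Real.sqrt π)]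
  calc 2 / Real.sqrt π * |∫ y in (0:ℝ)..x, rexp (-(y ^ 2))|
      ≤ 2 / Real.sqrt π * Real.sqrt π :=
        mul_le_mul_of_nonneg_left ((key 0 x).trans_eq h2) (by positivity)
    _ = 2 := by field_simp

lemma errf_neg (x : ℝ) : errf (-x) = - errf x := by
  have h := intervalIntegral.integral_comp_neg (a := (0:ℝ)) (b := x) (fun y => rexp (-(y ^ 2)))
  simp only [neg_zero, neg_neg] at h
  have h2 : ∫ y in (0:ℝ)..x, rexp (-(-y) ^ 2) = ∫ y in (0:ℝ)..x, rexp (-y ^ 2) := by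
    apply intervalIntegral.integral_congr; intro y _; simp
  have h3 : ∫ y in (-x)..(0:ℝ), rexp (-y ^ 2) = - ∫ y in (0:ℝ)..(-x), rexp (-y ^ 2) :=
    intervalIntegral.integral_symm _ _
  simp only [errf]
  have : ∫ y in (0:ℝ)..(-x), rexp (-(y ^ 2)) = - ∫ y in (0:ℝ)..x, rexp (-(y ^ 2)) := by
    rw [← neg_eq_iff_eq_neg, ← h3, ← h, h2]
  rw [this]; ring

/-! ### Hermite polynomial lemmas -/

lemma derivative_hermite (n : ℕ) :
    derivative (hermite (n + 1)) = C (n + 1 : ℤ) * hermite n := by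
  induction n with
  | zero => simp [hermite_one, hermite_zero]
  | succ n ih =>
    have hc : (C ((n:ℤ) + 1 + 1)) = C ((n:ℤ) + 1) + C 1 := by rw [← map_add]
    rw [hermite_succ (n+1), derivative_sub, derivative_mul, derivative_X, ih,
      derivative_mul, derivative_C]
    push_cast
    rw [hc, hermite_succ n]
    simp only [C_1, mul_one]
    ring

lemma hermite_gauss_hasDerivAt (n : ℕ) (t : ℝ) :
    HasDerivAt (fun x : ℝ => (aeval x (hermite n) : ℝ) * rexp (-(x ^ 2) / 2))
      (-((aeval t (hermite (n + 1)) : ℝ) * rexp (-(t ^ 2) / 2))) t := by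
  have h1 : HasDerivAt (fun x : ℝ => (aeval x (hermite n) : ℝ))
      ((aeval t (derivative (hermite n)) : ℝ)) t := by
    simpa using (hermite n).hasDerivAt_aeval t
  have h2 : HasDerivAt (fun x : ℝ => rexp (-(x ^ 2) / 2)) (-t * rexp (-(t ^ 2) / 2)) t := by
    have h0 : HasDerivAt (fun x : ℝ => -(x ^ 2) / 2) (-t) t := by
      have := ((hasDerivAt_pow 2 t).neg.div_const 2)
      refine this.congr_deriv ?_; push_cast; ring
    simpa [mul_comm] using h0.exp
  have := h1.mul h2
  refine this.congr_deriv ?_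
  have hs : (aeval t (hermite (n+1)) : ℝ) =
      t * aeval t (hermite n) - aeval t (derivative (hermite n)) := by
    rw [hermite_succ]; simp
  rw [hs]; ring

/-! ### The auxiliary Gaussian-type integrals J -/

noncomputable def Jh (n : ℕ) : ℝ := ∫ t : ℝ, (aeval t (hermite n) : ℝ) * rexp (-(3/2 : ℝ) * t ^ 2)

lemma Jh_zero : Jh 0 = Real.sqrt (2 * Real.pi / 3) := by
  have : Jh 0 = ∫ t : ℝ, rexp (-(3/2 : ℝ) * t ^ 2) := by
    unfold Jh; congr 1; funext t; simp [hermite_zero]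
  rw [this, integral_gaussian]
  congr 1; ring

lemma Jh_one : Jh 1 = 0 := by
  have hodd : ∀ t : ℝ, ((fun t : ℝ => (aeval t (hermite 1) : ℝ) * rexp (-(3/2 : ℝ) * t ^ 2)) (-t))
      = - ((fun t : ℝ => (aeval t (hermite 1) : ℝ) * rexp (-(3/2 : ℝ) * t ^ 2)) t) := by
    intro t; simp [hermite_one]
  unfold Jh
  have := integral_neg_eq_self (μ := (volume : Measure ℝ))
    (fun t : ℝ => (aeval t (hermite 1) : ℝ) * rexp (-(3/2 : ℝ) * t ^ 2))
  simp only [hodd, integral_neg] at this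
  linarith

lemma Jh_rec (n : ℕ) : Jh (n + 2) = -(2 * (n + 1 : ℝ) / 3) * Jh n := by
  have hb : (0:ℝ) < 3/2 := by norm_num
  have hu : ∀ x : ℝ, HasDerivAt (fun x : ℝ => (aeval x (hermite (n+1)) : ℝ))
      (((n : ℝ) + 1) * aeval x (hermite n)) x := by
    intro x
    have := (hermite (n+1)).hasDerivAt_aeval (𝕜 := ℝ) x
    rw [derivative_hermite n] at this
    simpa using this
  have hv : ∀ x : ℝ, HasDerivAt (fun x : ℝ => rexp (-(3/2 : ℝ) * x ^ 2))
      (-(3 * x) * rexp (-(3/2 : ℝ) * x ^ 2)) x := by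
    intro x
    have h0 : HasDerivAt (fun x : ℝ => -(3/2 : ℝ) * x ^ 2) (-(3 * x)) x := by
      have := (hasDerivAt_pow 2 x).const_mul (-(3/2 : ℝ))
      refine this.congr_deriv ?_; push_cast; ring
    simpa [mul_comm] using h0.exp
  have huv' : Integrable ((fun x : ℝ => (aeval x (hermite (n+1)) : ℝ)) *
      (fun x : ℝ => -(3 * x) * rexp (-(3/2 : ℝ) * x ^ 2))) := by
    have h := (integrable_poly_gauss (X * hermite (n+1)) hb).const_mul (-3)
    apply h.congr
    filter_upwards with x
    simp only [Pi.mul_apply, map_mul, aeval_X]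
    ring
  have hu'v : Integrable ((fun x : ℝ => ((n : ℝ) + 1) * aeval x (hermite n)) *
      (fun x : ℝ => rexp (-(3/2 : ℝ) * x ^ 2))) := by
    have h := (integrable_poly_gauss (hermite n) hb).const_mul ((n : ℝ) + 1)
    apply h.congr
    filter_upwards with x
    simp only [Pi.mul_apply]; ring
  have huv : Integrable ((fun x : ℝ => (aeval x (hermite (n+1)) : ℝ)) *
      (fun x : ℝ => rexp (-(3/2 : ℝ) * x ^ 2))) := by
    have h := integrable_poly_gauss (hermite (n+1)) hb
    apply h.congr
    filter_upwards with x
    simp only [Pi.mul_apply]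
  have ibp := integral_mul_deriv_eq_deriv_mul_of_integrable (fun x _ => hu x) (fun x _ => hv x) huv' hu'v huv
  have key : ∫ x : ℝ, x * (aeval x (hermite (n+1)) : ℝ) * rexp (-(3/2 : ℝ) * x ^ 2)
      = (((n : ℝ) + 1) / 3) * Jh n := by
    have h3 : ∫ x : ℝ, (aeval x (hermite (n+1)) : ℝ) * (-(3 * x) * rexp (-(3/2 : ℝ) * x ^ 2))
        = (-3 : ℝ) * ∫ x : ℝ, x * (aeval x (hermite (n+1)) : ℝ) * rexp (-(3/2 : ℝ) * x ^ 2) := by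
      rw [← integral_const_mul]
      congr 1; funext x; ring
    have h4 : ∫ x : ℝ, ((n : ℝ) + 1) * (aeval x (hermite n) : ℝ) * rexp (-(3/2 : ℝ) * x ^ 2)
        = ((n : ℝ) + 1) * Jh n := by
      rw [Jh, ← integral_const_mul]
      congr 1; funext x; ring
    rw [h3] at ibp
    rw [show (∫ x : ℝ, ((n : ℝ) + 1) * (aeval x (hermite n) : ℝ) * rexp (-(3/2 : ℝ) * x ^ 2))
      = ((n:ℝ)+1) * Jh n from h4] at ibp
    · linarith [ibp]
  have hexp : ∀ x : ℝ, (aeval x (hermite (n+2)) : ℝ)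
      = x * (aeval x (hermite (n+1)) : ℝ) - ((n : ℝ) + 1) * aeval x (hermite n) := by
    intro x
    rw [hermite_succ (n+1), map_sub, map_mul, aeval_X, derivative_hermite n]
    simp
  have : Jh (n+2) = (∫ x : ℝ, x * (aeval x (hermite (n+1)) : ℝ) * rexp (-(3/2 : ℝ) * x ^ 2))
      - ((n : ℝ) + 1) * Jh n := by
    have hInt1 : Integrable fun x : ℝ => x * (aeval x (hermite (n+1)) : ℝ)
        * rexp (-(3/2 : ℝ) * x ^ 2) := by
      have h := (integrable_poly_gauss (X * hermite (n+1)) hb)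
      apply h.congr; filter_upwards with x
      simp only [map_mul, aeval_X]
    have hInt2 : Integrable fun x : ℝ => ((n : ℝ) + 1)
        * ((aeval x (hermite n) : ℝ) * rexp (-(3/2 : ℝ) * x ^ 2)) :=
      (integrable_poly_gauss (hermite n) hb).const_mul _
    rw [Jh, Jh, ← integral_const_mul ((n : ℝ) + 1), ← integral_sub hInt1 hInt2]
    congr 1; funext x; rw [hexp x]; ring
  rw [this, key]; ring

lemma Jh_odd (k : ℕ) : Jh (2 * k + 1) = 0 := by
  induction k with
  | zero => simpa using Jh_one
  | succ k ih =>
    have : 2 * (k + 1) + 1 = (2 * k + 1) + 2 := by ring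
    rw [this, Jh_rec, ih, mul_zero]

lemma Jh_even (k : ℕ) : Jh (2 * k)
    = (-1 : ℝ) ^ k * (Nat.factorial (2 * k)) / (3 ^ k * Nat.factorial k)
      * Real.sqrt (2 * Real.pi / 3) := by
  induction k with
  | zero => simpa using Jh_zero
  | succ k ih =>
    have h2 : 2 * (k + 1) = (2 * k) + 2 := by ring
    rw [h2, Jh_rec, ih]
    have hf2 : (Nat.factorial (2 * k + 2) : ℝ)
        = (2 * k + 2) * ((2 * k + 1) * Nat.factorial (2 * k)) := by
      rw [Nat.factorial_succ, Nat.factorial_succ]; push_cast; ring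
    have hf1 : (Nat.factorial (k + 1) : ℝ) = (k + 1) * Nat.factorial k := by
      rw [Nat.factorial_succ]; push_cast; ring
    rw [show ((-1:ℝ))^(k+1) = -(-1:ℝ)^k by ring]
    rw [hf2, hf1]
    push_cast
    have hk : (Nat.factorial k : ℝ) ≠ 0 := by positivity
    have h2k : (Nat.factorial (2*k) : ℝ) ≠ 0 := by positivity
    field_simp
    ring

/-! ### Integration by parts against errf -/

lemma integrable_poly_gauss_half (p : Polynomial ℤ) :
    Integrable fun x : ℝ => (aeval x p : ℝ) * rexp (-(x ^ 2) / 2) := by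
  apply (integrable_poly_gauss p (by norm_num : (0:ℝ) < 1/2)).congr
  filter_upwards with x
  congr 1
  ring_nf

lemma integrable_errf_poly_gauss (p : Polynomial ℤ) :
    Integrable fun x : ℝ => errf x * ((aeval x p : ℝ) * rexp (-(x ^ 2) / 2)) :=
  (integrable_poly_gauss_half p).bdd_mul errf_continuous.aestronglyMeasurable (Filter.Eventually.of_forall errf_bound)

lemma erf_ibp (l : ℕ) :
    ∫ x : ℝ, errf x * ((aeval x (hermite (l + 1)) : ℝ) * rexp (-(x ^ 2) / 2))
      = (2 / Real.sqrt Real.pi) * Jh l := by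
  have hu : ∀ x : ℝ, HasDerivAt errf (2 / Real.sqrt Real.pi * rexp (-(x ^ 2))) x :=
    errf_hasDerivAt
  have hv := hermite_gauss_hasDerivAt l
  have hcombine : ∀ x : ℝ, rexp (-(x ^ 2)) * rexp (-(x ^ 2) / 2) = rexp (-(3/2 : ℝ) * x ^ 2) := by
    intro x; rw [← Real.exp_add]; congr 1; ring
  have huv' : Integrable ((fun x => errf x) *
      (fun x : ℝ => -((aeval x (hermite (l + 1)) : ℝ) * rexp (-(x ^ 2) / 2)))) := by
    apply ((integrable_errf_poly_gauss (hermite (l+1))).neg).congr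
    filter_upwards with x
    simp [Pi.mul_apply]
  have hu'v : Integrable ((fun x : ℝ => 2 / Real.sqrt Real.pi * rexp (-(x ^ 2))) *
      (fun x : ℝ => (aeval x (hermite l) : ℝ) * rexp (-(x ^ 2) / 2))) := by
    apply ((integrable_poly_gauss (hermite l)
      (by norm_num : (0:ℝ) < 3/2)).const_mul (2 / Real.sqrt Real.pi)).congr
    filter_upwards with x
    simp only [Pi.mul_apply]
    rw [← hcombine x]; ring
  have huv : Integrable ((fun x => errf x) *
      (fun x : ℝ => (aeval x (hermite l) : ℝ) * rexp (-(x ^ 2) / 2))) := by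
    apply (integrable_errf_poly_gauss (hermite l)).congr
    filter_upwards with x; simp [Pi.mul_apply]
  have ibp := integral_mul_deriv_eq_deriv_mul_of_integrable (fun x _ => hu x) (fun x _ => hv x) huv' hu'v huv
  have h1 : ∫ x : ℝ, errf x * (-((aeval x (hermite (l + 1)) : ℝ) * rexp (-(x ^ 2) / 2)))
      = - ∫ x : ℝ, errf x * ((aeval x (hermite (l + 1)) : ℝ) * rexp (-(x ^ 2) / 2)) := by
    rw [← integral_neg]; congr 1; funext x; ring
  have h2 : ∫ x : ℝ, (2 / Real.sqrt Real.pi * rexp (-(x ^ 2)))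
        * ((aeval x (hermite l) : ℝ) * rexp (-(x ^ 2) / 2))
      = (2 / Real.sqrt Real.pi) * Jh l := by
    rw [Jh, ← integral_const_mul]
    congr 1; funext x
    rw [← hcombine x]; ring
  rw [h1, h2] at ibp
  linarith

/-! ### From the Gaussian measure to the Lebesgue integral -/

lemma integral_gaussianReal_eq (f : ℝ → ℝ) :
    ∫ t, f t ∂(gaussianReal 0 1)
      = ∫ t, gaussianPDFReal 0 1 t * f t := by
  rw [gaussianReal_of_var_ne_zero 0 one_ne_zero]
  have hm : Measurable fun x => (gaussianPDFReal 0 1 x).toNNReal :=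
    (measurable_gaussianPDFReal 0 1).real_toNNReal
  have : (gaussianPDF 0 1) = fun x => ((gaussianPDFReal 0 1 x).toNNReal : ℝ≥0∞) := by
    funext x; rfl
  rw [this, integral_withDensity_eq_integral_smul hm]
  congr 1; funext x
  rw [NNReal.smul_def, smul_eq_mul, Real.coe_toNNReal _ (gaussianPDFReal_nonneg 0 1 x)]

lemma gaussianPDFReal_zero_one (t : ℝ) :
    gaussianPDFReal 0 1 t = (Real.sqrt (2 * Real.pi))⁻¹ * rexp (-(t ^ 2) / 2) := by
  rw [gaussianPDFReal]
  norm_num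

lemma a_eq (l : ℕ) :
    (∫ t, errf t * hermiteNorm l t ∂(gaussianReal 0 1))
      = (Real.sqrt (2 * Real.pi))⁻¹ * (Real.sqrt (Nat.factorial l))⁻¹
        * ∫ x : ℝ, errf x * ((aeval x (hermite l) : ℝ) * rexp (-(x ^ 2) / 2)) := by
  rw [integral_gaussianReal_eq, mul_assoc, ← integral_const_mul, ← integral_const_mul]
  congr 1; funext t
  rw [gaussianPDFReal_zero_one, hermiteNorm]
  field_simp

/-! ### Asymptotics -/

noncomputable def fa (j : ℕ) : ℝ :=
  4 * (Nat.factorial (2*j)) / (Real.pi * (2*(j:ℝ)+1) * 3^(2*j+1) * (Nat.factorial j)^2)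
noncomputable def ga (j : ℕ) : ℝ :=
  (2 / (Real.pi * (2 * (j : ℝ) + 1))) ^ ((3 : ℝ) / 2) * (2 / 3 : ℝ) ^ (2 * j + 1)

lemma ga_pos (j : ℕ) : 0 < ga j := by
  have h1 : (0:ℝ) < 2 / (Real.pi * (2 * (j : ℝ) + 1)) := by positivity
  have h2 := Real.rpow_pos_of_pos h1 ((3:ℝ)/2)
  have h3 : (0:ℝ) < (2/3 : ℝ) ^ (2*j+1) := by positivity
  exact mul_pos h2 h3

lemma canonical_fa (j : ℕ) :
    fa j / ga j = (Nat.factorial (2*j)) * Real.sqrt (Real.pi * (2*(j:ℝ)+1))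
      / (2^(2*j) * (Nat.factorial j)^2 * Real.sqrt 2) := by
  have hx : (0:ℝ) < Real.pi * (2*(j:ℝ)+1) := by positivity
  have hrpow : (2 / (Real.pi * (2 * (j : ℝ) + 1))) ^ ((3 : ℝ) / 2)
      = (2 / (Real.pi * (2*(j:ℝ)+1))) * (Real.sqrt 2 / Real.sqrt (Real.pi * (2*(j:ℝ)+1))) := by
    have h2x : (0:ℝ) < 2 / (Real.pi * (2*(j:ℝ)+1)) := by positivity
    rw [show ((3:ℝ)/2) = 1 + 1/2 by norm_num, Real.rpow_add h2x, Real.rpow_one,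
      ← Real.sqrt_eq_rpow, Real.sqrt_div (by norm_num : (0:ℝ) ≤ 2)]
  have hfj : (0:ℝ) < Nat.factorial j := by positivity
  have hsx : (0:ℝ) < Real.sqrt (Real.pi * (2*(j:ℝ)+1)) := Real.sqrt_pos.mpr hx
  have hs2 : (0:ℝ) < Real.sqrt 2 := by positivity
  have hsq2 : Real.sqrt 2 * Real.sqrt 2 = 2 := Real.mul_self_sqrt (by norm_num)
  rw [fa, ga, hrpow, div_pow]
  rw [div_eq_div_iff (by positivity) (by positivity)]
  field_simp
  ring

lemma canonical_stirling (j : ℕ) (hj : 1 ≤ j) :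
    stirlingSeq (2*j) / (stirlingSeq j)^2
      * Real.sqrt (Real.pi * (2*(j:ℝ)+1) / (2*(j:ℝ)))
    = (Nat.factorial (2*j)) * Real.sqrt (Real.pi * (2*(j:ℝ)+1))
      / (2^(2*j) * (Nat.factorial j)^2 * Real.sqrt 2) := by
  have hjR : (0:ℝ) < j := by exact_mod_cast hj
  have hs : (0:ℝ) < Real.sqrt j := Real.sqrt_pos.mpr hjR
  have hx : (0:ℝ) < Real.pi * (2*(j:ℝ)+1) := by positivity
  have h1 : Real.sqrt (Real.pi * (2*(j:ℝ)+1) / (2*(j:ℝ)))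
      = Real.sqrt (Real.pi * (2*(j:ℝ)+1)) / (Real.sqrt 2 * Real.sqrt j) := by
    rw [Real.sqrt_div hx.le, Real.sqrt_mul (by norm_num : (0:ℝ) ≤ 2)]
  have hc : ((2*j : ℕ) : ℝ) = 2*(j:ℝ) := by push_cast; ring
  have h2 : stirlingSeq (2*j) = (Nat.factorial (2*j)) /
      (2 * Real.sqrt j * (2 * ((j:ℝ) / Real.exp 1)) ^ (2*j)) := by
    rw [stirlingSeq, hc]
    congr 2
    · have h4 : (2:ℝ) * (2*(j:ℝ)) = (2 * Real.sqrt j)^2 := by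
        rw [mul_pow, Real.sq_sqrt hjR.le]; ring
      rw [h4, Real.sqrt_sq (by positivity)]
    · congr 1; ring
  have h3 : stirlingSeq j = (Nat.factorial j) /
      (Real.sqrt 2 * Real.sqrt j * ((j:ℝ) / Real.exp 1) ^ j) := by
    rw [stirlingSeq]
    congr 2
    have h4 : (2:ℝ) * (j:ℝ) = (Real.sqrt 2 * Real.sqrt j)^2 := by
      rw [mul_pow, Real.sq_sqrt hjR.le, Real.sq_sqrt (by norm_num : (0:ℝ) ≤ 2)]
    rw [h4, Real.sqrt_sq (by positivity)]
  rw [h1, h2, h3]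
  have hfj : (0:ℝ) < Nat.factorial j := by positivity
  have hf2j : (0:ℝ) < Nat.factorial (2*j) := by positivity
  have hw : (0:ℝ) < ((j:ℝ) / Real.exp 1) ^ j := by positivity
  have hsx : (0:ℝ) < Real.sqrt (Real.pi * (2*(j:ℝ)+1)) := Real.sqrt_pos.mpr hx
  have hs2 : (0:ℝ) < Real.sqrt 2 := by positivity
  have hK : (0:ℝ) < (2 * ((j:ℝ) / Real.exp 1)) ^ (2*j) := by positivity
  have hL : (0:ℝ) ≤ (Nat.factorial (2*j) : ℝ) /
        (2 * Real.sqrt j * (2 * ((j:ℝ) / Real.exp 1)) ^ (2*j)) /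
        ((Nat.factorial j : ℝ) / (Real.sqrt 2 * Real.sqrt j * ((j:ℝ) / Real.exp 1) ^ j))^2 *
      (Real.sqrt (Real.pi * (2*(j:ℝ)+1)) / (Real.sqrt 2 * Real.sqrt j)) := by positivity
  have hR : (0:ℝ) ≤ (Nat.factorial (2*j) : ℝ) * Real.sqrt (Real.pi * (2*(j:ℝ)+1))
      / (2^(2*j) * (Nat.factorial j : ℝ)^2 * Real.sqrt 2) := by positivity
  rw [← Real.sqrt_sq hL, ← Real.sqrt_sq hR]
  congr 1
  simp only [mul_pow, div_pow, Real.sq_sqrt hx.le, Real.sq_sqrt hjR.le,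
    Real.sq_sqrt (by norm_num : (0:ℝ) ≤ 2)]
  obtain ⟨E, hE⟩ : ∃ E : ℝ, Real.exp 1 = E := ⟨_, rfl⟩
  rw [hE]
  have he : E ≠ 0 := by rw [← hE]; exact (Real.exp_pos 1).ne'
  field_simp
  ring

lemma fa_isEquivalent : (fun j : ℕ => fa j) ~[atTop] ga := by
  rw [isEquivalent_iff_tendsto_one (by filter_upwards with j using (ga_pos j).ne')]
  have h2j : Tendsto (fun j : ℕ => 2 * j) atTop atTop :=
    by refine tendsto_atTop_mono (fun n => ?_) tendsto_id; simp only [id_eq]; omega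
  have hA : Tendsto (fun j : ℕ => stirlingSeq (2 * j)) atTop (𝓝 (Real.sqrt Real.pi)) :=
    tendsto_stirlingSeq_sqrt_pi.comp h2j
  have hB : Tendsto (fun j : ℕ => (stirlingSeq j) ^ 2) atTop (𝓝 (Real.sqrt Real.pi ^ 2)) :=
    tendsto_stirlingSeq_sqrt_pi.pow 2
  rw [Real.sq_sqrt Real.pi_pos.le] at hB
  have hC : Tendsto (fun j : ℕ => Real.pi * (2 * (j:ℝ) + 1) / (2 * (j:ℝ))) atTop (𝓝 Real.pi) := by
    have h0 : Tendsto (fun j : ℕ => Real.pi + (Real.pi / 2) * (1 / (j:ℝ))) atTop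
        (𝓝 (Real.pi + (Real.pi / 2) * 0)) :=
      (tendsto_const_nhds.add ((tendsto_one_div_atTop_nhds_zero_nat).const_mul _))
    rw [mul_zero, add_zero] at h0
    apply h0.congr'
    filter_upwards [eventually_ge_atTop 1] with j hj
    have hjR : (0:ℝ) < j := by exact_mod_cast hj
    field_simp
  have hD : Tendsto (fun j : ℕ => Real.sqrt (Real.pi * (2 * (j:ℝ) + 1) / (2 * (j:ℝ)))) atTop
      (𝓝 (Real.sqrt Real.pi)) :=
    (Real.continuous_sqrt.continuousAt.tendsto).comp hC
  have htot := (hA.div hB Real.pi_ne_zero).mul hD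
  have hlim : Real.sqrt Real.pi / Real.pi * Real.sqrt Real.pi = 1 := by
    rw [div_mul_eq_mul_div, Real.mul_self_sqrt Real.pi_pos.le, div_self Real.pi_ne_zero]
  rw [hlim] at htot
  apply htot.congr'
  filter_upwards [eventually_ge_atTop 1] with j hj
  rw [Pi.div_apply, canonical_stirling j hj, ← canonical_fa j]
  rfl

/-! ### The value of the odd coefficients -/

lemma odd_value (j : ℕ) :
    (Real.sqrt (2 * Real.pi))⁻¹ * (Real.sqrt (Nat.factorial (2*j+1)))⁻¹
      * ((2 / Real.sqrt Real.pi)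
        * ((-1 : ℝ) ^ j * (Nat.factorial (2 * j)) / (3 ^ j * Nat.factorial j)
            * Real.sqrt (2 * Real.pi / 3)))
    = 2 * (-1 : ℝ) ^ j * Real.sqrt (Nat.factorial (2 * j))
        / (Real.sqrt (Real.pi * (2 * j + 1)) * Real.sqrt 3 ^ (2 * j + 1)
            * (Nat.factorial j)) := by
  have hfact : (Nat.factorial (2*j+1) : ℝ) = (2*(j:ℝ)+1) * (Nat.factorial (2*j)) := by
    rw [Nat.factorial_succ]; push_cast; ring
  have h1 : Real.sqrt (Nat.factorial (2*j+1))
      = Real.sqrt (2*(j:ℝ)+1) * Real.sqrt (Nat.factorial (2*j)) := by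
    rw [hfact, Real.sqrt_mul (by positivity)]
  have h2 : Real.sqrt (2 * Real.pi) = Real.sqrt 2 * Real.sqrt Real.pi := by
    rw [Real.sqrt_mul (by norm_num : (0:ℝ) ≤ 2)]
  have h3 : Real.sqrt (2 * Real.pi / 3)
      = Real.sqrt 2 * Real.sqrt Real.pi / Real.sqrt 3 := by
    rw [Real.sqrt_div (by positivity) 3, h2]
  have h4 : Real.sqrt (Real.pi * (2 * (j:ℝ) + 1))
      = Real.sqrt Real.pi * Real.sqrt (2*(j:ℝ)+1) := by
    rw [Real.sqrt_mul Real.pi_pos.le]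
  have h5 : Real.sqrt 3 ^ (2 * j + 1) = 3 ^ j * Real.sqrt 3 := by
    rw [pow_succ, pow_mul, Real.sq_sqrt (by norm_num : (0:ℝ) ≤ 3)]
  have h6 : (Nat.factorial (2*j) : ℝ)
      = Real.sqrt (Nat.factorial (2*j)) * Real.sqrt (Nat.factorial (2*j)) :=
    (Real.mul_self_sqrt (by positivity)).symm
  have hπ : (0:ℝ) < Real.sqrt Real.pi := Real.sqrt_pos.mpr Real.pi_pos
  have hs2 : (0:ℝ) < Real.sqrt 2 := by positivity
  have hs3 : (0:ℝ) < Real.sqrt 3 := by positivity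
  have hsj : (0:ℝ) < Real.sqrt (2*(j:ℝ)+1) := Real.sqrt_pos.mpr (by positivity)
  have hsf : (0:ℝ) < Real.sqrt (Nat.factorial (2*j)) := Real.sqrt_pos.mpr (by positivity)
  have hfj : (0:ℝ) < (Nat.factorial j : ℝ) := by positivity
  rw [h1, h2, h3, h4, h5]
  set F := Real.sqrt (Nat.factorial (2*j)) with hFdef
  have hF : ((Nat.factorial (2*j)) : ℝ) = F ^ 2 := (Real.sq_sqrt (by positivity)).symm
  rw [hF]
  have hF0 : 0 < F := hsf
  field_simp

lemma a_odd_eq (j : ℕ) :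
    (∫ t, errf t * hermiteNorm (2*j+1) t ∂(gaussianReal 0 1))
    = 2 * (-1 : ℝ) ^ j * Real.sqrt (Nat.factorial (2 * j))
        / (Real.sqrt (Real.pi * (2 * j + 1)) * Real.sqrt 3 ^ (2 * j + 1)
            * (Nat.factorial j)) := by
  rw [a_eq (2*j+1), erf_ibp (2*j), Jh_even j, odd_value j]

/-! ### The vanishing of the even coefficients -/

lemma a_even_eq (l : ℕ) (hl : Even l) :
    (∫ t, errf t * hermiteNorm l t ∂(gaussianReal 0 1)) = 0 := by
  obtain ⟨m, rfl⟩ := hl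
  rcases m with - | k
  · -- l = 0
    rw [a_eq 0]
    have hodd : ∀ x : ℝ, ((fun x : ℝ => errf x * ((aeval x (hermite 0) : ℝ)
        * rexp (-(x ^ 2) / 2))) (-x))
        = - ((fun x : ℝ => errf x * ((aeval x (hermite 0) : ℝ) * rexp (-(x ^ 2) / 2))) x) := by
      intro x; simp [hermite_zero, errf_neg]
    have h := integral_neg_eq_self (μ := (volume : Measure ℝ))
      (fun x : ℝ => errf x * ((aeval x (hermite 0) : ℝ) * rexp (-(x ^ 2) / 2)))
    simp only [hodd, integral_neg] at h
    have h0 : ∫ x : ℝ, errf x * ((aeval x (hermite 0) : ℝ) * rexp (-(x ^ 2) / 2)) = 0 := by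
      linarith
    rw [h0, mul_zero]
  · -- l = (k+1) + (k+1) = (2k+1)+1
    have hll : (k+1) + (k+1) = (2*k+1) + 1 := by ring
    rw [hll, a_eq, erf_ibp (2*k+1), Jh_odd k, mul_zero, mul_zero]

end Aux

/-- the Hermite coefficients of erf. `a_l = 0` for even `l`,
`a_l = 2(−1)^{(l−1)/2}√((l−1)!)/(√(πl) 3^{l/2} ((l−1)/2)!)` for odd `l`, and
`a_l² ∼ (2/(πl))^{3/2} (2/3)^l` along odd `l`. -/
theorem erf_hermite_coefficients
    (a : ℕ → ℝ)
    (ha : a = fun l => ∫ t, errf t * hermiteNorm l t ∂(ProbabilityTheory.gaussianReal 0 1)) :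
    (∀ l, Even l → a l = 0) ∧
    (∀ j : ℕ,
      a (2 * j + 1) = 2 * (-1 : ℝ) ^ j * Real.sqrt (Nat.factorial (2 * j))
        / (Real.sqrt (Real.pi * (2 * j + 1)) * Real.sqrt 3 ^ (2 * j + 1)
            * (Nat.factorial j))) ∧
    (fun j : ℕ => (a (2 * j + 1)) ^ 2)
      ~[atTop] (fun j : ℕ => (2 / (Real.pi * (2 * (j : ℝ) + 1))) ^ ((3 : ℝ) / 2)
        * (2 / 3 : ℝ) ^ (2 * j + 1)) := by
  refine ⟨fun l hl => by rw [ha]; exact a_even_eq l hl,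
    fun j => by rw [ha]; exact a_odd_eq j, ?_⟩
  have hsq : (fun j : ℕ => (a (2 * j + 1)) ^ 2) = fun j => fa j := by
    funext j
    rw [ha]
    show (∫ t, errf t * hermiteNorm (2*j+1) t ∂(ProbabilityTheory.gaussianReal 0 1)) ^ 2 = fa j
    rw [a_odd_eq j, div_pow, mul_pow, mul_pow, mul_pow, mul_pow]
    rw [Real.sq_sqrt (by positivity : (0:ℝ) ≤ (Nat.factorial (2*j) : ℝ))]
    rw [Real.sq_sqrt (by positivity : (0:ℝ) ≤ Real.pi * (2 * (j:ℝ) + 1))]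
    rw [show (Real.sqrt 3 ^ (2*j+1))^2 = (Real.sqrt 3 ^ 2)^(2*j+1) by ring,
      Real.sq_sqrt (by norm_num : (0:ℝ) ≤ 3)]
    rw [fa]
    rw [show ((-1:ℝ)^j)^2 = 1 by rw [← pow_mul, mul_comm j 2, pow_mul]; norm_num]
    ring
  rw [hsq]
  exact fa_isEquivalent

end
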